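/- Let N be a positive integer and r ∈ {1,…,N}. Define T_r on pairs of permutations (j,k) of {1,…,N} by T_{r,1}(j,k) = j ∘ τ_{r,(j⁻¹∘k)(r)} and T_{r,2}(j,k) = k ∘ τ_{r,(k⁻¹∘j)(r)}, where τ_{a,b} denotes the transposition of a and b. Then T_r ∘ T_r is the identity map on pairs of permutations; in particular T_r is a bijection and T_{r,1}(j,k)(r) = k(r), T_{r,2}(j,k)(r) = j(r). -/
import Mathlib


/-- Lemma 1 (involution `T_r` on pairs of permutations). -/
theorem stmt_0 (N : ℕ) (hN : 1 ≤ N) (r : Fin N)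
    (T : Equiv.Perm (Fin N) × Equiv.Perm (Fin N) →
         Equiv.Perm (Fin N) × Equiv.Perm (Fin N))
    (hT : ∀ p : Equiv.Perm (Fin N) × Equiv.Perm (Fin N),
      T p = (p.1 * Equiv.swap r ((p.1⁻¹ * p.2) r),
             p.2 * Equiv.swap r ((p.2⁻¹ * p.1) r))) :
    (T ∘ T = id) ∧ Function.Bijective T ∧
      ∀ p : Equiv.Perm (Fin N) × Equiv.Perm (Fin N),
        (T p).1 r = p.2 r ∧ (T p).2 r = p.1 r := by
  have key : ∀ (a b : Equiv.Perm (Fin N)),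
      ((a * Equiv.swap r ((a⁻¹ * b) r))⁻¹ * (b * Equiv.swap r ((b⁻¹ * a) r))) r
        = (a⁻¹ * b) r := by
    intro a b
    simp [Equiv.Perm.mul_apply, Equiv.swap_apply_left]
  have hTT : T ∘ T = id := by
    funext p
    obtain ⟨a, b⟩ := p
    simp only [Function.comp_apply, id_eq, hT]
    have k1 := key a b
    have k2 := key b a
    simp only [k1, k2]
    ext x <;> simp [mul_assoc, Equiv.Perm.mul_apply]
  refine ⟨hTT, Function.bijective_iff_has_inverse.2 ⟨T,
      fun x => congrFun hTT x, fun x => congrFun hTT x⟩, ?_⟩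
  intro p
  rw [hT]
  constructor <;> simp [Equiv.Perm.mul_apply, Equiv.swap_apply_left]
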